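/- Let Σ be an alphabet, let w be a word over Σ, and let X, Y, Z ⊆ Σ* be languages with [] ∉ Y. Then the following are equivalent: (1) there exist x ∈ X, y ∈ Y, z ∈ Z with w = x ++ y ++ y ++ z; (2) there exist a maximal local power (p, θ, e) of w and natural numbers i, j, k with j ≥ 1 and i + 2j + k = e such that (take p w) ++ θ^i ∈ X, θ^j ∈ Y, and θ^k ++ (drop (p + e·|θ|) w) ∈ Z, where take p w denotes the prefix of w of length p and drop (p + e·|θ|) w denotes the suffix of w obtained by removing its first p + e·|θ| letters. -/

import Mathlib

/-- `wpow u k` is the `k`-fold concatenation of the word `u` with itself. -/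
def wpow {α : Type*} (u : List α) : ℕ → List α
  | 0 => []
  | k + 1 => u ++ wpow u k

/-- `u` occurs in `w` at position `j` (0-indexed). -/
def Occurs {α : Type*} (u w : List α) (j : ℕ) : Prop :=
  u <+: w.drop j

/-- A nonempty word is primitive if it is not a proper power. -/
def Primitive {α : Type*} (p : List α) : Prop :=
  p ≠ [] ∧ ∀ (u : List α) (k : ℕ), 2 ≤ k → p ≠ wpow u k

/-- `(p, θ, e)` is a maximal local power of `w`. -/
def MaxLocalPower {α : Type*} (w : List α) (p : ℕ) (θ : List α) (e : ℕ) : Prop :=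
  Primitive θ ∧ 2 ≤ e ∧ Occurs (wpow θ e) w p ∧
    ¬ θ <:+ w.take p ∧ ¬ Occurs θ w (p + e * θ.length)

lemma wpow_add {α : Type*} (u : List α) (a b : ℕ) :
    wpow u (a + b) = wpow u a ++ wpow u b := by
  induction a with
  | zero => simp [wpow]
  | succ n ih => simp [Nat.succ_add, wpow, ih]

lemma wpow_one {α : Type*} (u : List α) : wpow u 1 = u := by simp [wpow]

lemma length_wpow {α : Type*} (u : List α) (k : ℕ) :
    (wpow u k).length = k * u.length := by
  induction k with
  | zero => simp [wpow]
  | succ n ih => simp [wpow, ih, Nat.succ_mul]; ring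

lemma wpow_mul {α : Type*} (u : List α) (m k : ℕ) :
    wpow u (m * k) = wpow (wpow u m) k := by
  induction k with
  | zero => simp [wpow]
  | succ n ih => rw [show m * (n+1) = m + m*n by ring, wpow_add, ih]; simp [wpow]

lemma exists_prim_root_aux {α : Type*} :
    ∀ n (y : List α), y.length ≤ n → y ≠ [] →
      ∃ θ m, Primitive θ ∧ 1 ≤ m ∧ y = wpow θ m := by
  intro n
  induction n with
  | zero =>
    intro y hl hy
    exact absurd (List.length_eq_zero_iff.mp (Nat.le_zero.mp hl)) hy
  | succ n ih =>
    intro y hl hy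
    by_cases hp : Primitive y
    · exact ⟨y, 1, hp, le_refl _, (wpow_one y).symm⟩
    · have hp' : ¬ ∀ (u : List α) (k : ℕ), 2 ≤ k → y ≠ wpow u k :=
        fun h => hp ⟨hy, h⟩
      push_neg at hp'
      obtain ⟨u, k, hk, hyu⟩ := hp'
      have hlen : y.length = k * u.length := by rw [hyu, length_wpow]
      have hu : u ≠ [] := by
        intro h
        apply hy
        rw [h] at hlen; simp at hlen
        exact hlen
      have hup : 0 < u.length := List.length_pos_iff.mpr hu
      have hul : u.length < y.length := by
        rw [hlen]
        calc u.length < 2 * u.length := by omega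
        _ ≤ k * u.length := Nat.mul_le_mul_right _ hk
      obtain ⟨θ, m, hθ, hm, hum⟩ := ih u (by omega) hu
      refine ⟨θ, m * k, hθ, Nat.one_le_iff_ne_zero.mpr (by positivity), ?_⟩
      rw [hyu, hum, wpow_mul]

lemma exists_prim_root {α : Type*} (y : List α) (hy : y ≠ []) :
    ∃ θ m, Primitive θ ∧ 1 ≤ m ∧ y = wpow θ m :=
  exists_prim_root_aux y.length y le_rfl hy
theorem stmt1 {α : Type*} (w : List α) (X Y Z : Set (List α))
    (hY : ([] : List α) ∉ Y) :
    (∃ x ∈ X, ∃ y ∈ Y, ∃ z ∈ Z, w = x ++ y ++ y ++ z) ↔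
      (∃ (p : ℕ) (θ : List α) (e : ℕ), MaxLocalPower w p θ e ∧
        ∃ i j k : ℕ, 1 ≤ j ∧ i + 2 * j + k = e ∧
          w.take p ++ wpow θ i ∈ X ∧ wpow θ j ∈ Y ∧
          wpow θ k ++ w.drop (p + e * θ.length) ∈ Z) := by
  classical
  constructor
  · rintro ⟨x, hx, y, hy, z, hz, hw⟩
    have hyne : y ≠ [] := fun h => hY (h ▸ hy)
    obtain ⟨θ, m, hθ, hm, hym⟩ := exists_prim_root y hyne
    have hθne : θ ≠ [] := hθ.1
    have hL : 1 ≤ θ.length := List.length_pos_iff.mpr hθne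
    set P1 : ℕ → Prop := fun n => wpow θ n <:+ x with hP1
    set P2 : ℕ → Prop := fun n => wpow θ n <+: z with hP2
    set a := Nat.findGreatest P1 x.length with hadef
    set b := Nat.findGreatest P2 z.length with hbdef
    have ha : P1 a := Nat.findGreatest_spec (Nat.zero_le _)
      (show P1 0 from List.nil_suffix)
    have hb : P2 b := Nat.findGreatest_spec (Nat.zero_le _)
      (show P2 0 from List.nil_prefix)
    have hamax : ∀ c, a < c → c ≤ x.length → ¬ P1 c :=
      fun c h1 h2 => Nat.findGreatest_is_greatest h1 h2
    have hbmax : ∀ c, b < c → c ≤ z.length → ¬ P2 c :=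
      fun c h1 h2 => Nat.findGreatest_is_greatest h1 h2
    obtain ⟨s, hs⟩ := ha
    obtain ⟨t, ht⟩ := hb
    set p := s.length with hpdef
    set e := a + 2 * m + b with hedef
    have hw2 : w = s ++ (wpow θ a ++ (y ++ (y ++ z))) := by
      rw [hw, ← hs]; simp [List.append_assoc]
    have htake : w.take p = s := by rw [hw2]; exact List.take_left
    have hsplit : wpow θ e = wpow θ a ++ (wpow θ m ++ (wpow θ m ++ wpow θ b)) := by
      rw [show e = a + (m + (m + b)) by omega, wpow_add, wpow_add, wpow_add]
    have hdp : w.drop p = wpow θ e ++ t := by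
      rw [hw2, hpdef, List.drop_left, hsplit, ← hym, ← ht]
      simp [List.append_assoc]
    have hdropfull : w.drop (p + e * θ.length) = t := by
      have h1 : w.drop (p + e * θ.length) = (w.drop p).drop (e * θ.length) := by
        rw [List.drop_drop]
      rw [h1, hdp, ← length_wpow θ e, List.drop_left]
    have hnl : ¬ θ <:+ w.take p := by
      rintro ⟨s', hs'⟩
      rw [htake] at hs'
      have hsuf : wpow θ (a + 1) <:+ x := by
        refine ⟨s', ?_⟩
        rw [show wpow θ (a+1) = θ ++ wpow θ a from rfl, ← List.append_assoc, hs', hs]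
      have hlen : (a + 1) * θ.length ≤ x.length := by
        have := hsuf.length_le; rwa [length_wpow] at this
      exact hamax (a + 1) (Nat.lt_succ_self _)
        (le_trans (Nat.le_mul_of_pos_right _ hL) hlen) hsuf
    have hnr : ¬ Occurs θ w (p + e * θ.length) := by
      rintro ⟨t', ht'⟩
      rw [hdropfull] at ht'
      have hpre : wpow θ (b + 1) <+: z := by
        refine ⟨t', ?_⟩
        rw [wpow_add, wpow_one, List.append_assoc, ht', ht]
      have hlen : (b + 1) * θ.length ≤ z.length := by
        have := hpre.length_le; rwa [length_wpow] at this
      exact hbmax (b + 1) (Nat.lt_succ_self _)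
        (le_trans (Nat.le_mul_of_pos_right _ hL) hlen) hpre
    refine ⟨p, θ, e, ⟨hθ, by omega, ⟨t, hdp.symm⟩, hnl, hnr⟩,
      a, m, b, hm, rfl, ?_, ?_, ?_⟩
    · rw [htake, hs]; exact hx
    · rw [← hym]; exact hy
    · rw [hdropfull, ht]; exact hz
  · rintro ⟨p, θ, e, ⟨hprim, he2, hocc, _, _⟩, i, j, k, hj, hijk, hxX, hyY, hzZ⟩
    obtain ⟨r, hr⟩ := hocc
    have hdrop : w.drop (p + e * θ.length) = r := by
      have h1 : w.drop (p + e * θ.length) = (w.drop p).drop (e * θ.length) := by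
        rw [List.drop_drop]
      rw [h1, ← hr, ← length_wpow θ e, List.drop_left]
    have hsplit : wpow θ e = wpow θ i ++ (wpow θ j ++ (wpow θ j ++ wpow θ k)) := by
      rw [show e = i + (j + (j + k)) by omega, wpow_add, wpow_add, wpow_add]
    refine ⟨_, hxX, _, hyY, _, hzZ, ?_⟩
    conv_lhs => rw [← List.take_append_drop p w, ← hr, hsplit]
    rw [hdrop]
    simp [List.append_assoc]
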